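/- For any real α > -1 and positive integers m, k, the Type III exceptional X_m-Laguerre polynomial admits the integral representation L_{m,m+k}^{III,α}(x) = (m+k)·∫_0^x L_{k-1}^{α+1}(t)·L_m^{-α-1}(-t) dt + (m+1)·binom(k+α, k-1)·binom(m-α-1, m+1) for all real x. -/

import Mathlib

open Finset

/-- Generalized Laguerre polynomial `L_n^α(x) = ∑_{k=0}^n (-1)^k binom(n+α, n-k) x^k / k!`. -/
noncomputable def lag (α : ℝ) (n : ℕ) (x : ℝ) : ℝ :=
  ∑ k ∈ Finset.range (n + 1),
    (-1 : ℝ) ^ k * (∏ j ∈ Finset.range (n - k), (α + (k : ℝ) + 1 + (j : ℝ))) /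
      ((Nat.factorial (n - k) : ℝ) * (Nat.factorial k : ℝ)) * x ^ k

/-- Generalized Laguerre polynomial with integer index, with the convention
`L_n^α := 0` for `n < 0`. -/
noncomputable def lagZ (α : ℝ) (n : ℤ) (x : ℝ) : ℝ :=
  if 0 ≤ n then lag α n.toNat x else 0

/-- The Type III exceptional `X_m`-Laguerre polynomial of degree `m + k` (for `k ≥ 1`):
`L_{m,m+k}^{III,α}(x) = x L_{k-2}^{α+2}(x) L_m^{-α-1}(-x) + (m+1) L_{k-1}^{α+1}(x) L_{m+1}^{-α-2}(-x)`. -/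
noncomputable def LIII (α : ℝ) (m k : ℕ) (x : ℝ) : ℝ :=
  x * lagZ (α + 2) ((k : ℤ) - 2) x * lag (-α - 1) m (-x)
    + ((m : ℝ) + 1) * lag (α + 1) (k - 1) x * lag (-α - 2) (m + 1) (-x)

noncomputable def lcoef (α : ℝ) (n k : ℕ) : ℝ :=
  (-1 : ℝ) ^ k * (∏ j ∈ Finset.range (n - k), (α + (k : ℝ) + 1 + (j : ℝ))) /
      ((Nat.factorial (n - k) : ℝ) * (Nat.factorial k : ℝ))

lemma lag_eq (α : ℝ) (n : ℕ) (x : ℝ) :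
    lag α n x = ∑ k ∈ Finset.range (n+1), lcoef α n k * x ^ k := rfl

lemma lag_zero_fun (α x : ℝ) : lag α 0 x = 1 := by
  simp [lag]

lemma prod_succ' (a : ℝ) (s : ℕ) :
    ∏ j ∈ Finset.range (s+1), (a + (j:ℝ)) = a * ∏ j ∈ Finset.range s, (a + 1 + (j:ℝ)) := by
  rw [Finset.prod_range_succ']
  have : ∀ j ∈ Finset.range s, (a + ((j+1 : ℕ):ℝ)) = (a + 1 + (j:ℝ)) := by
    intro j _; push_cast; ring
  rw [Finset.prod_congr rfl this]
  simp [mul_comm]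

noncomputable def Pr (a : ℝ) (t : ℕ) : ℝ := ∏ j ∈ Finset.range t, (a + (j:ℝ))

lemma Pr_succ (a : ℝ) (t : ℕ) : Pr a (t+1) = Pr a t * (a + t) := Finset.prod_range_succ _ _

lemma Pr_succ' (a : ℝ) (t : ℕ) : Pr a (t+1) = a * Pr (a+1) t := prod_succ' a t

lemma lcoef_eq (α : ℝ) (k t : ℕ) :
    lcoef α (k+t) k = (-1 : ℝ)^k * Pr (α + k + 1) t / ((Nat.factorial t : ℝ) * (Nat.factorial k : ℝ)) := by
  simp [lcoef, Pr, Nat.add_sub_cancel_left]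

lemma Pr_congr {a b : ℝ} (h : a = b) (t : ℕ) : Pr a t = Pr b t := by rw [h]

lemma fact_ne (t : ℕ) : (Nat.factorial t : ℝ) ≠ 0 := by
  exact_mod_cast (Nat.factorial_pos t).ne'

-- coefficient identity for contiguous relation (II)
lemma lcoef_contig (α : ℝ) (k t : ℕ) :
    lcoef α (k+(t+1)) k = lcoef (α+1) (k+(t+1)) k - lcoef (α+1) (k+t) k := by
  rw [lcoef_eq, lcoef_eq, lcoef_eq, Pr_succ' (α + k + 1) t, Pr_succ ((α+1) + k + 1) t,
    Pr_congr (show (α + (k:ℝ) + 1 + 1) = (α+1) + k + 1 by ring) t]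
  rw [Nat.factorial_succ]
  push_cast
  field_simp
  ring

-- top coefficient independent of α
lemma lcoef_top (α β : ℝ) (n : ℕ) : lcoef α n n = lcoef β n n := by
  simp [lcoef]

-- coefficient identity for (III)
lemma lcoef_xrec (α : ℝ) (k t : ℕ) :
    lcoef (α+1) (k+(t+1)) k
      = ((k:ℝ)+(t:ℝ)+1+α+1) * lcoef α ((k+1)+t) (k+1) - ((k:ℝ)+(t:ℝ)+1+1) * lcoef α ((k+1)+(t+1)) (k+1) := by
  rw [lcoef_eq, lcoef_eq, lcoef_eq,
    Pr_congr (show ((α+1) + (k:ℝ) + 1) = α + ((k:ℕ)+1 : ℕ) + 1 by push_cast; ring) (t+1),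
    Pr_succ (α + ((k:ℕ)+1:ℕ) + 1) t]
  rw [Nat.factorial_succ t, Nat.factorial_succ k]
  push_cast
  field_simp
  ring

-- coefficient identity for derivative (I)
lemma lcoef_deriv (α : ℝ) (k t : ℕ) :
    ((k:ℝ)+1) * lcoef α ((k+1)+t) (k+1) = -(lcoef (α+1) (k+t) k) := by
  rw [lcoef_eq, lcoef_eq,
    Pr_congr (show (α + ((k:ℕ)+1:ℕ) + 1 : ℝ) = (α+1) + k + 1 by push_cast; ring) t]
  rw [Nat.factorial_succ k]
  push_cast
  field_simp
  ring

lemma lcoef_def (α : ℝ) (n k : ℕ) :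
    lcoef α n k = (-1 : ℝ)^k * Pr (α + k + 1) (n-k) / ((Nat.factorial (n-k) : ℝ) * (Nat.factorial k : ℝ)) := rfl

lemma lcoef_zero (α : ℝ) (n : ℕ) :
    lcoef α n 0 = Pr (α+1) n / (Nat.factorial n : ℝ) := by
  rw [lcoef_def]
  norm_num

lemma lcoef_contig' (α : ℝ) {n k : ℕ} (h : k ≤ n) :
    lcoef α (n+1) k = lcoef (α+1) (n+1) k - lcoef (α+1) n k := by
  have h1 : n + 1 - k = (n-k) + 1 := by omega
  set t := n - k with ht
  rw [lcoef_def, lcoef_def, lcoef_def, h1,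
    Pr_succ' (α + k + 1) t, Pr_succ ((α+1) + (k:ℝ) + 1) t,
    Pr_congr (show (α + (k:ℝ) + 1 + 1) = (α+1) + (k:ℝ) + 1 by ring) t,
    Nat.factorial_succ]
  push_cast
  field_simp
  ring

lemma lcoef_xrec' (α : ℝ) {n k : ℕ} (h : k < n) :
    lcoef (α+1) n k = ((n:ℝ)+α+1) * lcoef α n (k+1) - ((n:ℝ)+1) * lcoef α (n+1) (k+1) := by
  have h1 : n - k = (n-k-1) + 1 := by omega
  have h2 : n + 1 - (k+1) = (n-k-1) + 1 := by omega
  have h3 : n - (k+1) = n-k-1 := by omega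
  set t := n - k - 1 with ht
  have hn : (n:ℝ) = (k:ℝ) + (t:ℝ) + 1 := by
    have : n = k + t + 1 := by omega
    rw [this]; push_cast; ring
  rw [lcoef_def, lcoef_def, lcoef_def, h1, h2, h3,
    Pr_congr (show ((α+1) + (k:ℝ) + 1) = α + ((k:ℝ)+1) + 1 by ring) (t+1),
    Pr_congr (show (α + ((k+1:ℕ):ℝ) + 1) = α + ((k:ℝ)+1) + 1 by push_cast; ring) (t+1),
    Pr_congr (show (α + ((k+1:ℕ):ℝ) + 1) = α + ((k:ℝ)+1) + 1 by push_cast; ring) t,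
    Pr_succ (α + ((k:ℝ)+1) + 1) t,
    Nat.factorial_succ t, Nat.factorial_succ k, hn]
  push_cast
  field_simp
  ring

lemma lcoef_deriv' (α : ℝ) {n k : ℕ} (h : k ≤ n) :
    ((k:ℝ)+1) * lcoef α (n+1) (k+1) = -(lcoef (α+1) n k) := by
  have h2 : n + 1 - (k+1) = n - k := by omega
  rw [lcoef_def, lcoef_def, h2,
    Pr_congr (show (α + ((k+1:ℕ):ℝ) + 1) = (α+1) + (k:ℝ) + 1 by push_cast; ring) (n-k),
    Nat.factorial_succ k]
  push_cast
  field_simp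
  ring

lemma lag_contig (α : ℝ) (n : ℕ) (x : ℝ) :
    lag α (n+1) x = lag (α+1) (n+1) x - lag (α+1) n x := by
  rw [lag_eq, lag_eq, lag_eq,
    Finset.sum_range_succ (fun k => lcoef α (n+1) k * x ^ k) (n+1),
    Finset.sum_range_succ (fun k => lcoef (α+1) (n+1) k * x ^ k) (n+1)]
  have hs : ∑ k ∈ Finset.range (n+1), lcoef α (n+1) k * x ^ k
      = ∑ k ∈ Finset.range (n+1), (lcoef (α+1) (n+1) k * x ^ k - lcoef (α+1) n k * x ^ k) := by
    refine Finset.sum_congr rfl (fun k hk => ?_)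
    have hk' : k ≤ n := by simpa [Nat.lt_succ_iff] using hk
    rw [lcoef_contig' α hk']
    ring
  rw [hs, Finset.sum_sub_distrib, lcoef_top α (α+1) (n+1)]
  ring

lemma lag_xrec (α : ℝ) (n : ℕ) (x : ℝ) :
    x * lag (α+1) n x = ((n:ℝ) + α + 1) * lag α n x - ((n:ℝ)+1) * lag α (n+1) x := by
  rw [lag_eq, lag_eq, lag_eq,
    Finset.sum_range_succ (fun k => lcoef (α+1) n k * x ^ k) n,
    Finset.sum_range_succ' (fun k => lcoef α n k * x ^ k) n,
    Finset.sum_range_succ' (fun k => lcoef α (n+1) k * x ^ k) (n+1),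
    Finset.sum_range_succ (fun k => lcoef α (n+1) (k+1) * x ^ (k+1)) n]
  have hc : ((n:ℝ) + α + 1) * lcoef α n 0 - ((n:ℝ)+1) * lcoef α (n+1) 0 = 0 := by
    rw [lcoef_zero, lcoef_zero, Pr_succ, Nat.factorial_succ]
    push_cast
    field_simp
    ring
  have hs : x * ∑ k ∈ Finset.range n, lcoef (α+1) n k * x ^ k
      = ∑ k ∈ Finset.range n,
          (((n:ℝ) + α + 1) * (lcoef α n (k+1) * x ^ (k+1)) - ((n:ℝ)+1) * (lcoef α (n+1) (k+1) * x ^ (k+1))) := by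
    rw [Finset.mul_sum]
    refine Finset.sum_congr rfl (fun k hk => ?_)
    have hk' : k < n := Finset.mem_range.mp hk
    rw [lcoef_xrec' α hk']
    ring
  rw [mul_add, hs, Finset.sum_sub_distrib, ← Finset.mul_sum, ← Finset.mul_sum]
  have hb' := lcoef_deriv' α (le_refl n)
  linear_combination x^(n+1) * hb' - hc

lemma lag_hasDerivAt (α : ℝ) (n : ℕ) (x : ℝ) :
    HasDerivAt (fun y => lag α (n+1) y) (-(lag (α+1) n x)) x := by
  have h : HasDerivAt (fun y => ∑ k ∈ Finset.range (n+1+1), lcoef α (n+1) k * y ^ k)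
      (∑ k ∈ Finset.range (n+1+1), lcoef α (n+1) k * ((k:ℝ) * x ^ (k-1))) x := by
    apply HasDerivAt.fun_sum
    intro k _
    exact (hasDerivAt_pow k x).const_mul _
  have hfun : (fun y => ∑ k ∈ Finset.range (n+1+1), lcoef α (n+1) k * y ^ k)
      = fun y => lag α (n+1) y := by
    funext y; exact (lag_eq α (n+1) y).symm
  rw [hfun] at h
  convert h using 1
  rw [lag_eq, Finset.sum_range_succ' (fun k => lcoef α (n+1) k * ((k:ℝ) * x ^ (k-1))) (n+1)]
  simp only [Nat.cast_zero, zero_mul, mul_zero, add_zero, Nat.add_sub_cancel]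
  rw [← Finset.sum_neg_distrib]
  refine Finset.sum_congr rfl (fun k hk => ?_)
  have hk' : k ≤ n := by simpa [Nat.lt_succ_iff] using hk
  have := lcoef_deriv' α hk'
  push_cast at this ⊢
  linear_combination (-(x^k)) * this

lemma lag_zero_val (α : ℝ) (n : ℕ) : lag α n 0 = Pr (α+1) n / (Nat.factorial n : ℝ) := by
  rw [lag_eq, Finset.sum_eq_single 0]
  · rw [lcoef_zero]; simp
  · intro k _ hk; simp [zero_pow hk]
  · intro h; simp at h

lemma lag_continuous (α : ℝ) (n : ℕ) : Continuous (fun x => lag α n x) := by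
  have hfun : (fun x => lag α n x) = fun x => ∑ k ∈ Finset.range (n+1), lcoef α n k * x ^ k :=
    funext (lag_eq α n)
  rw [hfun]
  exact continuous_finset_sum _ (fun k _ => continuous_const.mul (continuous_pow k))

lemma lag_neg_hasDerivAt (β : ℝ) (m' : ℕ) (x : ℝ) :
    HasDerivAt (fun y => lag β (m'+1) (-y)) (lag (β+1) m' (-x)) x := by
  have h := (lag_hasDerivAt β m' (-x)).comp x (hasDerivAt_neg x)
  simp only [Function.comp_def] at h
  refine h.congr_deriv (Eq.symm ?_)
  ring

lemma xlag_hasDerivAt (α : ℝ) (j : ℕ) (x : ℝ) :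
    HasDerivAt (fun y => y * lag (α+2) j y)
      (((j:ℝ)+α+2) * lag (α+1) j x - (α+1) * lag (α+2) j x) x := by
  cases j with
  | zero =>
    have hfun : (fun y => y * lag (α+2) 0 y) = fun y => y := by
      funext y; rw [lag_zero_fun]; ring
    rw [hfun]
    refine (hasDerivAt_id x).congr_deriv (Eq.symm ?_)
    rw [lag_zero_fun, lag_zero_fun]
    push_cast; ring
  | succ j' =>
    have h := (hasDerivAt_id x).mul (lag_hasDerivAt (α+2) j' x)
    refine h.congr_deriv (Eq.symm ?_)
    simp only [id_eq]
    have h1 := lag_xrec (α+2) j' x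
    have h2 := lag_contig (α+1) j' x
    have e : (α+1+1 : ℝ) = α+2 := by ring
    rw [e] at h2
    push_cast
    linear_combination ((j':ℝ)+α+3) * h2 + h1

lemma LIII_hasDerivAt (α : ℝ) (m k : ℕ) (hm : 0 < m) (hk : 0 < k) (x : ℝ) :
    HasDerivAt (LIII α m k)
      (((m:ℝ)+(k:ℝ)) * (lag (α+1) (k-1) x * lag (-α-1) m (-x))) x := by
  obtain ⟨m', rfl⟩ : ∃ m', m = m'+1 := ⟨m-1, by omega⟩
  match k, hk with
  | 1, _ =>
    have hfun : LIII α (m'+1) 1 = fun y => (((m'+1:ℕ):ℝ)+1) * lag (-α-2) (m'+1+1) (-y) := by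
      funext y
      simp [LIII, lagZ, lag_zero_fun]
    rw [hfun]
    have h := (lag_neg_hasDerivAt (-α-2) (m'+1) x).const_mul (((m'+1:ℕ):ℝ)+1)
    refine h.congr_deriv (Eq.symm ?_)
    have e3 : (-α-2+1 : ℝ) = -α-1 := by ring
    rw [e3, lag_zero_fun]
    push_cast
    ring
  | (j+2), _ =>
    have hfun : LIII α (m'+1) (j+2) = fun y =>
        (y * lag (α+2) j y) * lag (-α-1) (m'+1) (-y)
          + (((m'+1:ℕ):ℝ)+1) * (lag (α+1) (j+1) y * lag (-α-2) (m'+1+1) (-y)) := by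
      funext y
      have hz : ((j+2 : ℕ) : ℤ) - 2 = (j : ℤ) := by push_cast; ring
      simp only [LIII, lagZ, hz, Int.toNat_natCast, if_pos (Int.natCast_nonneg j)]
      norm_num
      ring
    rw [hfun]
    have h1 := (xlag_hasDerivAt α j x).mul (lag_neg_hasDerivAt (-α-1) m' x)
    have h2 := ((lag_hasDerivAt (α+1) j x).mul
      (lag_neg_hasDerivAt (-α-2) (m'+1) x)).const_mul (((m'+1:ℕ):ℝ)+1)
    refine (h1.add h2).congr_deriv (Eq.symm ?_)
    have e1 : (α+1+1 : ℝ) = α+2 := by ring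
    have e2 : (-α-1+1 : ℝ) = -α := by ring
    have e3 : (-α-2+1 : ℝ) = -α-1 := by ring
    have hx1 := lag_xrec (-α-1) m' (-x)
    have hx2 := lag_xrec (-α-2) (m'+1) (-x)
    have hc3 := lag_contig (-α-2) m' (-x)
    have hx4 := lag_xrec (α+1) j x
    rw [e2] at hx1
    rw [e3] at hx2 hc3
    rw [e1] at hx4
    rw [e1, e2, e3]
    push_cast at hx1 hx2 hc3 hx4 ⊢
    linear_combination (lag (α+2) j x) * hx1 + (lag (α+2) j x) * hx2
      + (((m':ℝ)-α) * lag (α+2) j x) * hc3 + (lag (-α-1) (m'+1) (-x)) * hx4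

lemma Pr_reflect (a : ℝ) (n : ℕ) :
    ∏ i ∈ Finset.range n, (a + (n:ℝ) - 1 - (i:ℝ)) = Pr a n := by
  rw [Pr, ← Finset.prod_range_reflect (fun j => a + (j:ℝ)) n]
  refine Finset.prod_congr rfl (fun j hj => ?_)
  have hj' : j < n := Finset.mem_range.mp hj
  have h1 : ((n - 1 - j : ℕ) : ℝ) = (n:ℝ) - 1 - (j:ℝ) := by
    have : n - 1 - j = n - (1 + j) := by omega
    rw [this, Nat.cast_sub (by omega)]
    push_cast; ring
  rw [h1]
  ring

/-- integral representation
`L_{m,m+k}^{III,α}(x) = (m+k) ∫_0^x L_{k-1}^{α+1}(t) L_m^{-α-1}(-t) dt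
  + (m+1) binom(k+α, k-1) binom(m-α-1, m+1)`, where the generalized binomial
coefficients are written as the falling-factorial products divided by factorials. -/
theorem typeIII_integral_rep (α : ℝ) (hα : -1 < α) (m k : ℕ) (hm : 0 < m) (hk : 0 < k)
    (x : ℝ) :
    LIII α m k x
      = ((m : ℝ) + (k : ℝ)) * (∫ t in (0 : ℝ)..x, lag (α + 1) (k - 1) t * lag (-α - 1) m (-t))
        + ((m : ℝ) + 1) *
          ((∏ i ∈ Finset.range (k - 1), ((k : ℝ) + α - (i : ℝ))) / (Nat.factorial (k - 1) : ℝ)) *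
          ((∏ i ∈ Finset.range (m + 1), ((m : ℝ) - α - 1 - (i : ℝ))) /
            (Nat.factorial (m + 1) : ℝ)) := by
  have hcont : Continuous (fun t => ((m:ℝ)+(k:ℝ)) * (lag (α+1) (k-1) t * lag (-α-1) m (-t))) :=
    continuous_const.mul ((lag_continuous (α+1) (k-1)).mul
      ((lag_continuous (-α-1) m).comp continuous_neg))
  have key := intervalIntegral.integral_eq_sub_of_hasDerivAt
    (f := LIII α m k)
    (fun t _ => LIII_hasDerivAt α m k hm hk t) (hcont.intervalIntegrable 0 x)
  rw [intervalIntegral.integral_const_mul] at key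
  rw [key]
  have h0 : LIII α m k 0
      = ((m : ℝ) + 1) *
          ((∏ i ∈ Finset.range (k - 1), ((k : ℝ) + α - (i : ℝ))) / (Nat.factorial (k - 1) : ℝ)) *
          ((∏ i ∈ Finset.range (m + 1), ((m : ℝ) - α - 1 - (i : ℝ))) /
            (Nat.factorial (m + 1) : ℝ)) := by
    have hp1 : ∏ i ∈ Finset.range (k-1), ((k : ℝ) + α - (i : ℝ)) = Pr (α+2) (k-1) := by
      rw [← Pr_reflect (α+2) (k-1)]
      refine Finset.prod_congr rfl (fun i hi => ?_)
      have : ((k-1 : ℕ) : ℝ) = (k:ℝ) - 1 := by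
        rw [Nat.cast_sub (by omega)]; push_cast; ring
      rw [this]; ring
    have hp2 : ∏ i ∈ Finset.range (m+1), ((m : ℝ) - α - 1 - (i : ℝ)) = Pr (-α-1) (m+1) := by
      rw [← Pr_reflect (-α-1) (m+1)]
      refine Finset.prod_congr rfl (fun i hi => ?_)
      push_cast; ring
    rw [hp1, hp2]
    simp only [LIII, neg_zero, lag_zero_val, mul_zero, zero_mul, zero_add]
    have e1 : (α+1+1 : ℝ) = α+2 := by ring
    have e2 : (-α-2+1 : ℝ) = -α-1 := by ring
    rw [e1, e2]
  rw [h0]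
  ring
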